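/- Let V be a finite set with a metric d_G (graph distance) and let {(M_k, C_k)}_{k=1}^N be pairs where M_k : V → {I,X,Y,Z} and C_k is a submeasurement of M_k (C_k(v) ∈ {I, M_k(v)} for all v). Suppose that for every vertex v and every function σ : B_d(v) → {I,X,Y,Z} on the closed ball of radius d around v, the number of indices k with M_k restricted to B_d(v) equal to σ and C_k(v) ≠ I is even. Then for any family of functions h_v assigning ±1 to each pair (local symbol at v, restriction of the measurement to B_d(v)), the product over all k of ∏_{v : C_k(v) ≠ I} h_v(C_k(v), M_k|_{B_d(v)}) equals 1. -/
import Mathlib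


open scoped Classical

inductive Pauli | I | X | Y | Z
deriving DecidableEq

instance : Fintype Pauli :=
  ⟨{.I, .X, .Y, .Z}, fun x => by cases x <;> simp⟩

/-- Deterministic core of the d-LHV* contradiction lemma: if the pairs
`(M k, C k)` of measurements and submeasurements satisfy the distance-`d` parity
condition at every vertex, then every communication-assisted deterministic
assignment (each vertex's ±1 output depending on its own symbol and the
measurement restricted to the radius-`d` ball) yields total product `1`. -/
theorem stmt7 {V : Type} [Fintype V] [DecidableEq V] (N d : ℕ)
    (dG : V → V → ℕ) (hrefl : ∀ v, dG v v = 0)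
    (M C : Fin N → V → Pauli)
    (hsub : ∀ k v, C k v = Pauli.I ∨ C k v = M k v)
    (hpar : ∀ (v : V) (σ : V → Pauli),
      Even ((Finset.univ.filter (fun k =>
        (∀ u, dG v u ≤ d → M k u = σ u) ∧ C k v ≠ Pauli.I)).card)) :
    ∀ h : V → Pauli → (V → Pauli) → ℤ,
      (∀ v σ m, h v σ m = 1 ∨ h v σ m = -1) →
      (∏ k, ∏ v, if C k v = Pauli.I then 1
        else h v (C k v) (fun u => if dG v u ≤ d then M k u else Pauli.I)) = 1 := by
  intro h hh
  rw [Finset.prod_comm]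
  refine Finset.prod_eq_one fun v _ => ?_
  have key := Finset.prod_fiberwise (Finset.univ : Finset (Fin N))
    (fun k (u : V) => if dG v u ≤ d then M k u else Pauli.I)
    (fun k => if C k v = Pauli.I then (1 : ℤ)
        else h v (C k v) (fun u => if dG v u ≤ d then M k u else Pauli.I))
  rw [← key]
  refine Finset.prod_eq_one fun σ _ => ?_
  by_cases hout : ∀ u, ¬ dG v u ≤ d → σ u = Pauli.I
  · have hset : (Finset.univ.filter
        (fun k => (fun u => if dG v u ≤ d then M k u else Pauli.I) = σ))
        = Finset.univ.filter (fun k => ∀ u, dG v u ≤ d → M k u = σ u) := by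
      ext k
      simp only [Finset.mem_filter, Finset.mem_univ, true_and]
      constructor
      · intro hk u hu
        rw [← congrFun hk u]
        simp [hu]
      · intro hk
        funext u
        by_cases hu : dG v u ≤ d
        · simp [hu, hk u hu]
        · simp [hu, hout u hu]
    rw [hset]
    have hstep : (∏ k ∈ Finset.univ.filter (fun k => ∀ u, dG v u ≤ d → M k u = σ u),
          if C k v = Pauli.I then (1 : ℤ)
          else h v (C k v) (fun u => if dG v u ≤ d then M k u else Pauli.I))
        = ∏ k ∈ (Finset.univ.filter (fun k => ∀ u, dG v u ≤ d → M k u = σ u)).filter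
            (fun k => C k v ≠ Pauli.I), h v (σ v) σ := by
      conv_rhs => rw [Finset.prod_filter]
      refine Finset.prod_congr rfl fun k hk => ?_
      simp only [Finset.mem_filter, Finset.mem_univ, true_and] at hk
      by_cases hc : C k v = Pauli.I
      · simp [hc]
      · have hball : (fun u => if dG v u ≤ d then M k u else Pauli.I) = σ := by
          funext u
          by_cases hu : dG v u ≤ d
          · simp [hu, hk u hu]
          · simp [hu, hout u hu]
        have hCv : C k v = σ v := by
          rcases hsub k v with h1 | h1
          · exact absurd h1 hc
          · rw [h1, ← hk v (by rw [hrefl v]; exact Nat.zero_le d)]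
        simp [hc, hball, hCv]
    rw [hstep, Finset.prod_const, Finset.filter_filter]
    have hcard := hpar v σ
    rcases hh v (σ v) σ with h1 | h1
    · rw [h1, one_pow]
    · rw [h1, hcard.neg_one_pow]
  · have : (Finset.univ.filter
        (fun k => (fun u => if dG v u ≤ d then M k u else Pauli.I) = σ)) = ∅ := by
      rw [Finset.filter_eq_empty_iff]
      intro k _ hk
      push_neg at hout
      obtain ⟨u, hu, hne⟩ := hout
      apply hne
      rw [← congrFun hk u]
      simp [hu]
    rw [this, Finset.prod_empty]
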